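/- If y ∈ ℕ satisfies y ≥ 2 and a₁ − d ≥ C(y,2) + 1 (where C(y,2) is the binomial coefficient y choose 2), then there exist indices h, k with 1 ≤ h ≤ k, k ≥ y, and ω_h + ω_k ∈ Ap(S); in particular ω_{a₁−1} ≥ ω₁ + ω_y. -/

import Mathlib

lemma sum_update_sub' {d : ℕ} (c a : Fin d → ℕ) (j : Fin d) (hj : c j ≠ 0) :
    ∑ i, c i * a i = a j + ∑ i, (Function.update c j (c j - 1)) i * a i := by
  rw [← Finset.sum_erase_add _ _ (Finset.mem_univ j),
      ← Finset.sum_erase_add _ _ (Finset.mem_univ j)]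
  have h1 : ∀ i ∈ Finset.univ.erase j,
      (Function.update c j (c j - 1)) i * a i = c i * a i := by
    intro i hi
    rw [Function.update_of_ne (Finset.ne_of_mem_erase hi)]
  rw [Finset.sum_congr rfl h1, Function.update_self]
  have h2 : c j = (c j - 1) + 1 := by omega
  nlinarith [h2]

lemma sum_update_add' {d : ℕ} (c a : Fin d → ℕ) (j : Fin d) :
    ∑ i, (Function.update c j (c j + 1)) i * a i = a j + ∑ i, c i * a i := by
  have h := sum_update_sub' (Function.update c j (c j + 1)) a j (by simp)
  rwa [Function.update_self, Nat.add_sub_cancel, Function.update_idem,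
    Function.update_eq_self] at h

theorem stmt14
    (d : ℕ) (hd : 2 ≤ d)
    (a : Fin d → ℕ)
    (ha_pos : ∀ i, 0 < a i)
    (ha_mono : StrictMono a)
    (ha_gcd : Finset.univ.gcd a = 1)
    (a1 : ℕ) (ha1 : a1 = a ⟨0, by omega⟩)
    (S : Set ℕ)
    (hS : S = {m : ℕ | ∃ c : Fin d → ℕ, m = ∑ i, c i * a i})
    (hmin : ∀ j : Fin d, ¬ ∃ c : Fin d → ℕ, c j = 0 ∧ a j = ∑ i, c i * a i)
    (F : ℕ) (hF : F ∉ S) (hFmax : ∀ m : ℕ, F < m → m ∈ S)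
    (ω : ℕ → ℕ)
    (hω_mono : ∀ i j : ℕ, i < j → j < a1 → ω i < ω j)
    (hω_range : ω '' Set.Iio a1 = {w ∈ S | ¬ ∃ s ∈ S, s + a1 = w})
    (y : ℕ) (hy : 2 ≤ y) (hyd : y.choose 2 + 1 ≤ a1 - d)
    :
    (∃ h k : ℕ, 1 ≤ h ∧ h ≤ k ∧ y ≤ k ∧ k ≤ a1 - 1 ∧
        ω h + ω k ∈ {w ∈ S | ¬ ∃ s ∈ S, s + a1 = w}) ∧
      ω 1 + ω y ≤ ω (a1 - 1) := by
  have hd0 : 0 < d := by omega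
  set i0 : Fin d := ⟨0, hd0⟩ with hi0
  have ha1' : a1 = a i0 := ha1
  have ha1pos : 0 < a1 := ha1' ▸ ha_pos i0
  set Ap : Set ℕ := {w ∈ S | ¬ ∃ s ∈ S, s + a1 = w} with hApdef
  -- basic S facts
  have hzeroS : (0 : ℕ) ∈ S := by
    rw [hS]; exact ⟨fun _ => 0, by simp⟩
  have hgenS : ∀ j : Fin d, a j ∈ S := by
    intro j; rw [hS]
    refine ⟨fun i => if i = j then 1 else 0, ?_⟩
    simp
  have haddS : ∀ s t : ℕ, s ∈ S → t ∈ S → s + t ∈ S := by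
    intro s t hs ht
    rw [hS] at hs ht ⊢
    obtain ⟨c, rfl⟩ := hs; obtain ⟨c', rfl⟩ := ht
    refine ⟨fun i => c i + c' i, ?_⟩
    rw [← Finset.sum_add_distrib]
    congr 1; funext i; ring
  have h0Ap : (0 : ℕ) ∈ Ap := by
    refine ⟨hzeroS, ?_⟩
    rintro ⟨s, hs, heq⟩; omega
  -- ω facts
  have hωmem : ∀ i, i < a1 → ω i ∈ Ap := by
    intro i hi
    have : ω i ∈ ω '' Set.Iio a1 := Set.mem_image_of_mem ω hi
    rwa [hω_range] at this
  have hApim : ∀ u, u ∈ Ap → ∃ i, i < a1 ∧ ω i = u := by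
    intro u hu
    have hu' : u ∈ ω '' Set.Iio a1 := by rw [hω_range]; exact hu
    obtain ⟨i, hi, hii⟩ := hu'
    exact ⟨i, hi, hii⟩
  have hω0 : ω 0 = 0 := by
    obtain ⟨i, hi, hii⟩ := hApim 0 h0Ap
    rcases Nat.eq_zero_or_pos i with h | h
    · exact h ▸ hii
    · have := hω_mono 0 i h hi; omega
  -- generators (other than a1) are in Ap
  have hgenAp : ∀ j : Fin d, j ≠ i0 → a j ∈ Ap := by
    intro j hj
    refine ⟨hgenS j, ?_⟩
    rintro ⟨s, hsS, hseq⟩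
    rw [hS] at hsS
    obtain ⟨e, rfl⟩ := hsS
    by_cases hej : e j = 0
    · apply hmin j
      refine ⟨Function.update e i0 (e i0 + 1), ?_, ?_⟩
      · rw [Function.update_of_ne hj]; exact hej
      · rw [sum_update_add', ← ha1']; omega
    · have h1 : e j * a j ≤ ∑ i, e i * a i :=
        Finset.single_le_sum (f := fun i => e i * a i) (fun i _ => Nat.zero_le _) (Finset.mem_univ j)
      have h2 : a j ≤ e j * a j := Nat.le_mul_of_pos_left _ (Nat.pos_of_ne_zero hej)
      omega
  -- decomposition of nonzero Apéry elements
  have hdecomp : ∀ w, w ∈ Ap → w ≠ 0 →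
      (∃ j : Fin d, j ≠ i0 ∧ w = a j) ∨
      (∃ u v : ℕ, u ∈ Ap ∧ v ∈ Ap ∧ u ≠ 0 ∧ v ≠ 0 ∧ w = u + v) := by
    intro w hw hw0
    obtain ⟨hwS, hwnAp⟩ := hw
    have hwS' := hwS
    rw [hS] at hwS'
    obtain ⟨c, hc⟩ := hwS'
    have hc0 : c i0 = 0 := by
      by_contra hne
      apply hwnAp
      refine ⟨∑ i, (Function.update c i0 (c i0 - 1)) i * a i, ?_, ?_⟩
      · rw [hS]; exact ⟨_, rfl⟩
      · have := sum_update_sub' c a i0 hne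
        rw [← ha1'] at this; omega
    have hex : ∃ j, c j ≠ 0 := by
      by_contra hall
      push_neg at hall
      apply hw0
      rw [hc]
      exact Finset.sum_eq_zero fun i _ => by rw [hall i, zero_mul]
    obtain ⟨j, hj⟩ := hex
    have hji0 : j ≠ i0 := fun h => hj (h ▸ hc0)
    have hsum : w = a j + ∑ i, (Function.update c j (c j - 1)) i * a i := by
      rw [hc]; exact sum_update_sub' c a j hj
    set w' := ∑ i, (Function.update c j (c j - 1)) i * a i with hw'
    by_cases h0 : w' = 0
    · left; exact ⟨j, hji0, by omega⟩
    · right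
      refine ⟨a j, w', hgenAp j hji0, ⟨?_, ?_⟩, (ha_pos j).ne', h0, hsum⟩
      · rw [hS]; exact ⟨_, rfl⟩
      · rintro ⟨s, hsS, hseq⟩
        apply hwnAp
        exact ⟨s + a j, haddS _ _ hsS (hgenS j), by omega⟩
  -- nonstrict monotonicity
  have mono_le : ∀ i j : ℕ, i ≤ j → j < a1 → ω i ≤ ω j := by
    intro i j hij hj
    rcases eq_or_lt_of_le hij with rfl | h
    · exact le_refl _
    · exact (hω_mono i j h hj).le
  -- main existence statement
  have main : ∃ h k : ℕ, 1 ≤ h ∧ h ≤ k ∧ y ≤ k ∧ k ≤ a1 - 1 ∧ ω h + ω k ∈ Ap := by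
    by_contra H
    push_neg at H
    classical
    set A : Finset ℕ := (Finset.Ico 1 a1).image ω with hA
    set G : Finset ℕ := (Finset.univ.erase i0).image a with hG
    set P : Finset ℕ :=
      (((Finset.Ico 1 y) ×ˢ (Finset.Ico 1 y)).filter fun p => p.1 ≤ p.2).image
        (fun p => ω p.1 + ω p.2) with hP
    have hAcard : A.card = a1 - 1 := by
      rw [hA, Finset.card_image_of_injOn, Nat.card_Ico]
      intro i hi j hj hij
      simp only [Finset.coe_Ico, Set.mem_Ico] at hi hj
      rcases lt_trichotomy i j with h | h | h
      · have := hω_mono i j h hj.2; omega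
      · exact h
      · have := hω_mono j i h hi.2; omega
    have hsub : A ⊆ G ∪ P := by
      intro w hw
      rw [hA, Finset.mem_image] at hw
      obtain ⟨m, hm, rfl⟩ := hw
      rw [Finset.mem_Ico] at hm
      have hwAp : ω m ∈ Ap := hωmem m hm.2
      have hwne : ω m ≠ 0 := by
        have := hω_mono 0 m hm.1 hm.2; omega
      rcases hdecomp (ω m) hwAp hwne with ⟨j, hj, hwj⟩ | ⟨u, v, hu, hv, hu0, hv0, huv⟩
      · apply Finset.mem_union_left
        rw [hG, Finset.mem_image]
        exact ⟨j, Finset.mem_erase.mpr ⟨hj, Finset.mem_univ j⟩, hwj.symm⟩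
      · apply Finset.mem_union_right
        obtain ⟨h, hha, rfl⟩ := hApim u hu
        obtain ⟨k, hka, rfl⟩ := hApim v hv
        have hh1 : 1 ≤ h := by
          rcases Nat.eq_zero_or_pos h with h0 | h0
          · exact absurd (h0 ▸ hω0 : ω h = 0) hu0
          · exact h0
        have hk1 : 1 ≤ k := by
          rcases Nat.eq_zero_or_pos k with h0 | h0
          · exact absurd (h0 ▸ hω0 : ω k = 0) hv0
          · exact h0
        rw [hP, Finset.mem_image]
        rcases le_total h k with hhk | hhk
        · have hky : k < y := by
            by_contra hky
            push_neg at hky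
            exact H h k hh1 hhk hky (by omega) (huv ▸ hwAp)
          have hhy : h < y := by omega
          exact ⟨(h, k), by
            simp only [Finset.mem_filter, Finset.mem_product, Finset.mem_Ico]
            exact ⟨⟨⟨hh1, hhy⟩, ⟨hk1, hky⟩⟩, hhk⟩, huv.symm⟩
        · have hky : h < y := by
            by_contra hky
            push_neg at hky
            have hmem : ω k + ω h ∈ Ap := by rw [add_comm, ← huv]; exact hwAp
            exact H k h hk1 hhk hky (by omega) hmem
          have hhy : k < y := by omega
          refine ⟨(k, h), by
            simp only [Finset.mem_filter, Finset.mem_product, Finset.mem_Ico]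
            exact ⟨⟨⟨hk1, hhy⟩, ⟨hh1, hky⟩⟩, hhk⟩, ?_⟩
          show ω k + ω h = ω m
          rw [huv]; exact add_comm _ _
    have hGcard : G.card ≤ d - 1 := by
      refine le_trans Finset.card_image_le ?_
      rw [Finset.card_erase_of_mem (Finset.mem_univ i0), Finset.card_univ, Fintype.card_fin]
    have hPcard : P.card ≤ y.choose 2 := by
      have hinj : P.card ≤ (((Finset.Ico 1 y) ×ˢ (Finset.Ico 1 y)).filter
          fun p => p.1 ≤ p.2).card := Finset.card_image_le
      refine le_trans hinj ?_
      have hmap : (((Finset.Ico 1 y) ×ˢ (Finset.Ico 1 y)).filter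
          fun p => p.1 ≤ p.2).card ≤ ((Finset.Ico 1 y).sym2).card := by
        apply Finset.card_le_card_of_injOn (fun p : ℕ × ℕ => Sym2.mk p.1 p.2)
        · intro p hp
          simp only [Finset.mem_coe, Finset.mem_filter, Finset.mem_product] at hp
          obtain ⟨⟨h1, h2⟩, _⟩ := hp
          obtain ⟨p1, p2⟩ := p
          exact Finset.mk_mem_sym2_iff.mpr ⟨h1, h2⟩
        · intro p hp q hq hpq
          simp only [Finset.coe_filter, Set.mem_setOf_eq, Finset.mem_product,
            Finset.mem_Ico] at hp hq
          obtain ⟨p1, p2⟩ := p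
          obtain ⟨q1, q2⟩ := q
          rw [Sym2.eq_iff] at hpq
          have : p1 = q1 ∧ p2 = q2 := by
            rcases hpq with ⟨rfl, rfl⟩ | ⟨h1, h2⟩
            · exact ⟨rfl, rfl⟩
            · constructor <;> omega
          simp [this.1, this.2]
      refine le_trans hmap ?_
      rw [Finset.card_sym2, Nat.card_Ico]
      have : y - 1 + 1 = y := by omega
      rw [this]
    have h1 := Finset.card_le_card hsub
    have h2 := Finset.card_union_le G P
    omega
  obtain ⟨h, k, hh1, hhk, hyk, hka, hsumAp⟩ := main
  refine ⟨⟨h, k, hh1, hhk, hyk, hka, hsumAp⟩, ?_⟩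
  obtain ⟨m, hm, hmeq⟩ := hApim _ hsumAp
  calc ω 1 + ω y ≤ ω h + ω k :=
        add_le_add (mono_le 1 h hh1 (by omega)) (mono_le y k hyk (by omega))
    _ = ω m := hmeq.symm
    _ ≤ ω (a1 - 1) := mono_le m (a1 - 1) (by omega) (by omega)
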